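/- Let A be a real n×n strict Monge matrix, i.e., A(i,k) + A(j,l) > A(i,l) + A(j,k) for all i < j and k < l. Then for every permutation σ ≠ id of [n], Σ_i A(i,σ(i)) < Σ_i A(i,i); that is, the identity is the unique permutation attaining the tropical permanent. -/

import Mathlib

/-- For a real strict Monge matrix, the identity is the unique permutation
attaining the tropical permanent. -/
theorem strict_monge_identity_unique_max (n : ℕ) (A : Matrix (Fin n) (Fin n) ℝ)
    (hMonge : ∀ i j k l : Fin n, i < j → k < l → A i l + A j k < A i k + A j l) :
    ∀ σ : Equiv.Perm (Fin n), σ ≠ 1 → ∑ i, A i (σ i) < ∑ i, A i i := by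
  set f : Equiv.Perm (Fin n) → ℝ := fun σ => ∑ i, A i (σ i) with hf
  have improve : ∀ σ : Equiv.Perm (Fin n), σ ≠ 1 → ∃ τ, f σ < f τ := by
    intro σ hσ
    obtain ⟨i, j, hij, hinv⟩ : ∃ i j : Fin n, i < j ∧ σ j < σ i := by
      by_contra h
      push_neg at h
      apply hσ
      have hmono : StrictMono σ := fun a b hab =>
        (h a b hab).lt_of_ne (fun he => absurd (σ.injective he) hab.ne)
      have hsub : (⟨σ, fun {a b} => hmono.le_iff_le⟩ : Fin n ≃o Fin n)
          = OrderIso.refl (Fin n) := Subsingleton.elim _ _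
      exact Equiv.ext fun i => congrArg (fun e : Fin n ≃o Fin n => e i) hsub
    refine ⟨σ * Equiv.swap i j, ?_⟩
    have key : A i (σ i) + A j (σ j) < A i (σ j) + A j (σ i) := by
      have := hMonge i j (σ j) (σ i) hij hinv
      linarith
    have hjmem : j ∈ Finset.univ.erase i :=
      Finset.mem_erase.2 ⟨hij.ne', Finset.mem_univ j⟩
    have e1 : ∀ g : Fin n → ℝ, ∑ k, g k
        = g i + (g j + ∑ k ∈ (Finset.univ.erase i).erase j, g k) := by
      intro g
      rw [Finset.add_sum_erase _ g hjmem, Finset.add_sum_erase _ g (Finset.mem_univ i)]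
    have hrest : ∑ k ∈ (Finset.univ.erase i).erase j, A k (σ (Equiv.swap i j k))
        = ∑ k ∈ (Finset.univ.erase i).erase j, A k (σ k) := by
      refine Finset.sum_congr rfl fun k hk => ?_
      obtain ⟨hkj, hki, -⟩ := Finset.mem_erase.1 hk |>.imp id Finset.mem_erase.1
      rw [Equiv.swap_apply_of_ne_of_ne hki hkj]
    have h1 : f σ = A i (σ i) + (A j (σ j)
        + ∑ k ∈ (Finset.univ.erase i).erase j, A k (σ k)) := e1 _
    have h2 : f (σ * Equiv.swap i j) = A i (σ j) + (A j (σ i)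
        + ∑ k ∈ (Finset.univ.erase i).erase j, A k (σ (Equiv.swap i j k))) := by
      have := e1 (fun k => A k (σ (Equiv.swap i j k)))
      simpa [hf, Equiv.swap_apply_left, Equiv.swap_apply_right] using this
    rw [h1, h2, hrest]
    linarith
  obtain ⟨σ₀, -, hmax⟩ := Finset.exists_max_image Finset.univ f ⟨1, Finset.mem_univ 1⟩
  have hσ₀ : σ₀ = 1 := by
    by_contra h
    obtain ⟨τ, hτ⟩ := improve σ₀ h
    exact absurd (hmax τ (Finset.mem_univ τ)) (not_le.2 hτ)
  intro σ hσ
  obtain ⟨τ, hτ⟩ := improve σ hσ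
  have : f σ < f σ₀ := lt_of_lt_of_le hτ (hmax τ (Finset.mem_univ τ))
  simpa [hf, hσ₀] using this
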